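/- Let $a > 0$ be a real number. There exist a constant $C > 0$ and $N$ such that for all integers $m \ge N$ and all reals $x > 0$ the following holds: if $Y_{(1)} \le \dots \le Y_{(m)}$ are the order statistics of $m$ points placed independently and uniformly at random on the interval $[0, x]$, and $s_i = \frac{(2i-1)x}{2m}$ for $i = 1, \dots, m$ are the equidistant positions in $[0,x]$ at spacing $x/m$, then $\sum_{i=1}^{m} \mathbb{E}|Y_{(i)} - s_i|^a \le C \, x^{a} \, m^{1 - a/2}$. -/

import Mathlib

open Real Finset

lemma mylem_exp_quad {l : ℝ} (h : |l| ≤ 1) : Real.exp l ≤ 1 + l + l^2 := by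
  have := Real.exp_bound h (by norm_num : 0 < 2)
  have h2 : ∑ i ∈ Finset.range 2, l ^ i / i.factorial = 1 + l := by
    simp [Finset.sum_range_succ]
  rw [h2] at this
  have h3 : Real.exp l - (1+l) ≤ |l|^2 * ((2:ℕ).succ / ((2:ℕ).factorial * 2)) := (abs_le.mp this).2
  simp [Nat.factorial] at h3
  nlinarith [sq_abs l, sq_nonneg l]

lemma mylem_rpow_le {a : ℝ} (ha : 0 < a) {k : ℕ} (hak : a ≤ k) {y : ℝ} (hy : 0 ≤ y) :
    y ^ a ≤ 1 + k.factorial * Real.exp y := by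
  rcases le_or_gt y 1 with h | h
  · have : y ^ a ≤ 1 := Real.rpow_le_one hy h ha.le
    have : (0:ℝ) ≤ k.factorial * Real.exp y := by positivity
    linarith [Real.rpow_le_one hy h ha.le]
  · have h1 : y ^ a ≤ y ^ (k:ℝ) := Real.rpow_le_rpow_of_exponent_le h.le hak
    have h2 : y ^ (k:ℝ) = y ^ k := Real.rpow_natCast y k
    have h3 : y ^ k / k.factorial ≤ Real.exp y := by
      calc y^k / k.factorial ≤ ∑ i ∈ Finset.range (k+1), y^i / i.factorial :=
            Finset.single_le_sum (f := fun i => y^i / i.factorial)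
              (fun i _ => by positivity) (Finset.self_mem_range_succ k)
        _ ≤ Real.exp y := Real.sum_le_exp_of_nonneg (by linarith) _
    have hk : (0:ℝ) < k.factorial := by positivity
    have : y^k ≤ k.factorial * Real.exp y := by
      rw [div_le_iff₀ hk] at h3; linarith [h3]
    linarith [h1, h2.le, this]

lemma mylem_mgf (n : ℕ) {u l : ℝ} (hu : 0 ≤ u) (hu1 : u ≤ 1) (hl : |l| ≤ 1) :
    ∑ j ∈ Finset.range (n+1), (n.choose j : ℝ) * u^j * (1-u)^(n-j) * Real.exp (l*((j:ℝ) - n*u))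
      ≤ Real.exp ((n:ℝ)*l^2) := by
  have hE : ∀ j : ℕ, Real.exp (l*((j:ℝ) - n*u)) = (Real.exp l)^j * Real.exp (-(l*n*u)) := by
    intro j
    rw [← Real.exp_nat_mul, ← Real.exp_add]
    ring_nf
  have hsum : ∑ j ∈ Finset.range (n+1), (n.choose j : ℝ) * u^j * (1-u)^(n-j) * Real.exp (l*((j:ℝ) - n*u))
      = Real.exp (-(l*n*u)) * (u * Real.exp l + (1-u))^n := by
    rw [add_pow, Finset.mul_sum]
    apply Finset.sum_congr rfl
    intro j hj
    rw [hE j, mul_pow]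
    ring
  rw [hsum]
  have hexp : (0:ℝ) < Real.exp l := Real.exp_pos l
  have hbase : 0 ≤ u * Real.exp l + (1-u) := by nlinarith
  have h1 : u * Real.exp l + (1-u) ≤ Real.exp (u * (Real.exp l - 1)) := by
    have := Real.add_one_le_exp (u * (Real.exp l - 1))
    nlinarith
  have h2 : (u * Real.exp l + (1-u))^n ≤ Real.exp ((n:ℝ) * (u * (Real.exp l - 1))) := by
    calc (u * Real.exp l + (1-u))^n ≤ (Real.exp (u * (Real.exp l - 1)))^n :=
          pow_le_pow_left₀ hbase h1 n
      _ = Real.exp ((n:ℝ) * (u * (Real.exp l - 1))) := (Real.exp_nat_mul _ n).symm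
  calc Real.exp (-(l*n*u)) * (u * Real.exp l + (1-u))^n
      ≤ Real.exp (-(l*n*u)) * Real.exp ((n:ℝ) * (u * (Real.exp l - 1))) := by
        exact mul_le_mul_of_nonneg_left h2 (Real.exp_pos _).le
    _ = Real.exp ((n:ℝ) * u * (Real.exp l - 1 - l)) := by
        rw [← Real.exp_add]; ring_nf
    _ ≤ Real.exp ((n:ℝ)*l^2) := by
        apply Real.exp_le_exp.mpr
        have hq : Real.exp l - 1 - l ≤ l^2 := by
          have := mylem_exp_quad hl; linarith
        have hnu : 0 ≤ (n:ℝ) * u := by positivity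
        have hl2 : 0 ≤ l^2 := sq_nonneg l
        calc (n:ℝ) * u * (Real.exp l - 1 - l) ≤ (n:ℝ) * u * l^2 :=
              mul_le_mul_of_nonneg_left hq hnu
          _ ≤ (n:ℝ) * l^2 := by
              have : (n:ℝ) * u ≤ (n:ℝ) := by nlinarith [Nat.cast_nonneg (α := ℝ) n]
              exact mul_le_mul_of_nonneg_right this hl2

lemma mylem_reindex (n : ℕ) (u : ℝ) (φ : ℕ → ℝ) :
    ∑ i ∈ Finset.Icc 1 (n+1), (i:ℝ) * (((n+1).choose i : ℕ) : ℝ) * (u^(i-1) * (1-u)^(n+1-i) * φ (i-1))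
      = ((n:ℝ)+1) * ∑ j ∈ Finset.range (n+1), ((n.choose j : ℕ) : ℝ) * u^j * (1-u)^(n-j) * φ j := by
  rw [← Finset.Ico_add_one_right_eq_Icc, Finset.sum_Ico_eq_sum_range, Finset.mul_sum]
  simp only [show n + 1 + 1 - 1 = n + 1 from rfl]
  apply Finset.sum_congr rfl
  intro j hj
  have hj' : j ≤ n := Nat.lt_succ_iff.mp (Finset.mem_range.mp hj)
  have hsub1 : 1 + j - 1 = j := by omega
  have hsub2 : n + 1 - (1 + j) = n - j := by omega
  have hchoose : ((1+j) : ℕ) * (n+1).choose (1+j) = (n+1) * n.choose j := by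
    rw [add_comm 1 j, mul_comm]
    exact (Nat.add_one_mul_choose_eq n j).symm
  have hcast : ((1+j : ℕ) : ℝ) * (((n+1).choose (1+j) : ℕ) : ℝ) = ((n:ℝ)+1) * ((n.choose j : ℕ) : ℝ) := by
    exact_mod_cast congrArg (Nat.cast : ℕ → ℝ) hchoose
  rw [hsub1, hsub2]
  push_cast at hcast ⊢
  linear_combination (u ^ j * (1 - u) ^ (n - j) * φ j) * hcast

lemma mylem_term (a : ℝ) (ha : 0 < a) (k : ℕ) (hak : a ≤ (k:ℝ)) (n : ℕ) (hn : 1 ≤ n)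
    (u : ℝ) (hu : 0 ≤ u) (hu1 : u ≤ 1) (j : ℕ) :
    |u - (2*((j:ℝ)+1)-1)/(2*((n:ℝ)+1))| ^ a ≤ (Real.sqrt n/((n:ℝ)+1))^a *
      (1 + (Real.exp 1 * k.factorial) *
        (Real.exp ((1/Real.sqrt n)*((j:ℝ) - n*u)) + Real.exp (-((1/Real.sqrt n)*((j:ℝ) - n*u))))) := by
  set s := Real.sqrt n with hs_def
  have hs1 : 1 ≤ s := by
    rw [hs_def, show (1:ℝ) = Real.sqrt 1 by simp]
    exact Real.sqrt_le_sqrt (by exact_mod_cast hn)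
  have hs0 : 0 < s := lt_of_lt_of_le one_pos hs1
  have hm0 : (0:ℝ) < (n:ℝ)+1 := by positivity
  set z := (j:ℝ) - n*u with hz_def
  set l := 1/s with hl_def
  have hl0 : 0 < l := by positivity
  set y := (2*|z|+1)/(2*s) with hy_def
  have hy0 : 0 ≤ y := by positivity
  -- step 1 : |u - c| ≤ (s/(n+1)) * y
  have h1 : |u - (2*((j:ℝ)+1)-1)/(2*((n:ℝ)+1))| ≤ (s/((n:ℝ)+1)) * y := by
    have heq : u - (2*((j:ℝ)+1)-1)/(2*((n:ℝ)+1)) = (-(2*z) + (2*u-1))/(2*((n:ℝ)+1)) := by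
      rw [hz_def]; field_simp; ring
    rw [heq, abs_div]
    have hnum : |(-(2*z) + (2*u-1))| ≤ 2*|z|+1 := by
      calc |(-(2*z) + (2*u-1))| ≤ |(-(2*z))| + |2*u-1| := abs_add_le _ _
        _ ≤ 2*|z| + 1 := by
            have : |2*u-1| ≤ 1 := abs_le.mpr ⟨by linarith, by linarith⟩
            rw [abs_neg, abs_mul]
            simp only [abs_two]
            linarith
    have hden : |2*((n:ℝ)+1)| = 2*((n:ℝ)+1) := abs_of_pos (by positivity)
    rw [hden]
    have hrhs : (s/((n:ℝ)+1)) * y = (2*|z|+1)/(2*((n:ℝ)+1)) := by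
      rw [hy_def]; field_simp
    rw [hrhs]
    exact div_le_div_of_nonneg_right hnum (by positivity) |>.trans_eq rfl
  -- step 2 : rpow
  have h2 : |u - (2*((j:ℝ)+1)-1)/(2*((n:ℝ)+1))| ^ a ≤ (s/((n:ℝ)+1))^a * y^a := by
    rw [← Real.mul_rpow (by positivity) hy0]
    exact Real.rpow_le_rpow (abs_nonneg _) h1 ha.le
  -- step 3 : y^a ≤ 1 + k! exp y
  have h3 : y ^ a ≤ 1 + k.factorial * Real.exp y := mylem_rpow_le ha hak hy0
  -- step 4 : exp y ≤ e * (exp(lz) + exp(-lz))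
  have h4 : Real.exp y ≤ Real.exp 1 * (Real.exp (l*z) + Real.exp (-(l*z))) := by
    have hyle : y ≤ |z| * l + 1 := by
      rw [hy_def, hl_def]
      rw [div_le_iff₀ (by positivity)]
      have hss : s * (1/s) = 1 := mul_one_div_cancel (ne_of_gt hs0)
      nlinarith [abs_nonneg z, mul_nonneg (abs_nonneg z) (le_of_lt hl0)]
    have he1 : Real.exp y ≤ Real.exp (|z| * l) * Real.exp 1 := by
      rw [← Real.exp_add]
      exact Real.exp_le_exp.mpr hyle
    have he2 : Real.exp (|z| * l) ≤ Real.exp (l*z) + Real.exp (-(l*z)) := by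
      rcases abs_cases z with ⟨h, _⟩ | ⟨h, _⟩
      · rw [h, mul_comm]; linarith [(Real.exp_pos (-(l*z))).le]
      · rw [h]
        have : -z * l = -(l*z) := by ring
        rw [this]; linarith [(Real.exp_pos (l*z)).le]
    calc Real.exp y ≤ Real.exp (|z| * l) * Real.exp 1 := he1
      _ ≤ (Real.exp (l*z) + Real.exp (-(l*z))) * Real.exp 1 :=
          mul_le_mul_of_nonneg_right he2 (Real.exp_pos 1).le
      _ = Real.exp 1 * (Real.exp (l*z) + Real.exp (-(l*z))) := by ring
  -- combine
  have h5 : y ^ a ≤ 1 + (Real.exp 1 * k.factorial) * (Real.exp (l*z) + Real.exp (-(l*z))) := by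
    have : (k.factorial:ℝ) * Real.exp y ≤ (Real.exp 1 * k.factorial) * (Real.exp (l*z) + Real.exp (-(l*z))) := by
      calc (k.factorial:ℝ) * Real.exp y ≤ (k.factorial:ℝ) * (Real.exp 1 * (Real.exp (l*z) + Real.exp (-(l*z)))) :=
            mul_le_mul_of_nonneg_left h4 (by positivity)
        _ = (Real.exp 1 * k.factorial) * (Real.exp (l*z) + Real.exp (-(l*z))) := by ring
    linarith [h3]
  calc |u - (2*((j:ℝ)+1)-1)/(2*((n:ℝ)+1))| ^ a ≤ (s/((n:ℝ)+1))^a * y^a := h2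
    _ ≤ (s/((n:ℝ)+1))^a * (1 + (Real.exp 1 * k.factorial) * (Real.exp (l*z) + Real.exp (-(l*z)))) :=
        mul_le_mul_of_nonneg_left h5 (Real.rpow_nonneg (by positivity) a)

lemma mylem_pointwise (a : ℝ) (ha : 0 < a) (k : ℕ) (hak : a ≤ (k:ℝ)) (n : ℕ) (hn : 1 ≤ n)
    {u : ℝ} (hu : 0 ≤ u) (hu1 : u ≤ 1) :
    ∑ i ∈ Finset.Icc 1 (n+1), (i:ℝ) * (((n+1).choose i : ℕ) : ℝ) *
        (|u - (2*(i:ℝ)-1)/(2*((n:ℝ)+1))|^a * u^(i-1) * (1-u)^(n+1-i))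
      ≤ ((n:ℝ)+1) * ((Real.sqrt n/((n:ℝ)+1))^a * (1 + 2*(Real.exp 1)^2 * k.factorial)) := by
  have hs1 : 1 ≤ Real.sqrt n := by
    rw [show (1:ℝ) = Real.sqrt 1 by simp]
    exact Real.sqrt_le_sqrt (by exact_mod_cast hn)
  have hs0 : 0 < Real.sqrt n := lt_of_lt_of_le one_pos hs1
  have hl : |1/Real.sqrt n| ≤ 1 := by
    rw [abs_of_pos (by positivity), div_le_one hs0]; exact hs1
  have hnl : (n:ℝ) * (1/Real.sqrt n)^2 = 1 := by
    rw [div_pow, one_pow, Real.sq_sqrt (Nat.cast_nonneg n)]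
    have hne : (n:ℝ) ≠ 0 := by
      have h0 : (0:ℝ) < n := by exact_mod_cast hn
      exact ne_of_gt h0
    field_simp
  have hP0 : (0:ℝ) ≤ (Real.sqrt n/((n:ℝ)+1))^a := Real.rpow_nonneg (by positivity) a
  have hK0 : (0:ℝ) ≤ Real.exp 1 * k.factorial := by positivity
  set φ : ℕ → ℝ := fun j =>
    (Real.sqrt n/((n:ℝ)+1))^a * (1 + (Real.exp 1 * k.factorial) *
      (Real.exp ((1/Real.sqrt n)*((j:ℝ) - n*u)) + Real.exp (-((1/Real.sqrt n)*((j:ℝ) - n*u))))) with hphi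
  -- termwise bound
  have step1 : ∑ i ∈ Finset.Icc 1 (n+1), (i:ℝ) * (((n+1).choose i : ℕ) : ℝ) *
        (|u - (2*(i:ℝ)-1)/(2*((n:ℝ)+1))|^a * u^(i-1) * (1-u)^(n+1-i))
      ≤ ∑ i ∈ Finset.Icc 1 (n+1), (i:ℝ) * (((n+1).choose i : ℕ) : ℝ) *
        (u^(i-1) * (1-u)^(n+1-i) * φ (i-1)) := by
    apply Finset.sum_le_sum
    intro i hi
    have hi1 : 1 ≤ i := (Finset.mem_Icc.mp hi).1
    have hcast : ((i-1 : ℕ) : ℝ) + 1 = (i:ℝ) := by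
      have h9 : ((i-1 : ℕ) : ℝ) = (i:ℝ) - 1 := by
        push_cast [Nat.cast_sub hi1]; ring
      linarith
    have hterm := mylem_term a ha k hak n hn u hu hu1 (i-1)
    rw [hcast] at hterm
    have hpow : (0:ℝ) ≤ u^(i-1) * (1-u)^(n+1-i) :=
      mul_nonneg (pow_nonneg hu _) (pow_nonneg (by linarith) _)
    have hcoef : (0:ℝ) ≤ (i:ℝ) * (((n+1).choose i : ℕ) : ℝ) := by positivity
    have hmain : |u - (2*(i:ℝ)-1)/(2*((n:ℝ)+1))|^a * u^(i-1) * (1-u)^(n+1-i)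
        ≤ u^(i-1) * (1-u)^(n+1-i) * φ (i-1) := by
      have h := mul_le_mul_of_nonneg_right hterm hpow
      calc |u - (2*(i:ℝ)-1)/(2*((n:ℝ)+1))|^a * u^(i-1) * (1-u)^(n+1-i)
          = |u - (2*(i:ℝ)-1)/(2*((n:ℝ)+1))|^a * (u^(i-1) * (1-u)^(n+1-i)) := by ring
        _ ≤ ((Real.sqrt n/((n:ℝ)+1))^a * (1 + (Real.exp 1 * k.factorial) *
              (Real.exp ((1/Real.sqrt n)*(((i-1:ℕ):ℝ) - n*u)) +
               Real.exp (-((1/Real.sqrt n)*(((i-1:ℕ):ℝ) - n*u)))))) *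
            (u^(i-1) * (1-u)^(n+1-i)) := h
        _ = u^(i-1) * (1-u)^(n+1-i) * φ (i-1) := by rw [hphi]; ring
    exact mul_le_mul_of_nonneg_left hmain hcoef
  rw [mylem_reindex n u φ] at step1
  -- the three binomial sums
  have hone : ∑ j ∈ Finset.range (n+1), ((n.choose j : ℕ) : ℝ) * u^j * (1-u)^(n-j) = 1 := by
    have h1 : ∑ j ∈ Finset.range (n+1), ((n.choose j : ℕ) : ℝ) * u^j * (1-u)^(n-j)
        = (u + (1-u))^n := by
      rw [add_pow]
      exact Finset.sum_congr rfl (fun j _ => by ring)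
    rw [h1, show u + (1-u) = 1 by ring, one_pow]
  have hmgfp := mylem_mgf n hu hu1 hl
  have hmgfm : ∑ j ∈ Finset.range (n+1), ((n.choose j):ℝ) * u^j * (1-u)^(n-j) *
      Real.exp (-((1/Real.sqrt n)*((j:ℝ) - n*u))) ≤ Real.exp ((n:ℝ)*(1/Real.sqrt n)^2) := by
    have h2 := mylem_mgf n hu hu1 (l := -(1/Real.sqrt n)) (by rwa [abs_neg])
    have h3 : ∀ j : ℕ, -(1/Real.sqrt n) * ((j:ℝ) - n*u) = -((1/Real.sqrt n)*((j:ℝ) - n*u)) := by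
      intro j; ring
    simp only [h3] at h2
    calc ∑ j ∈ Finset.range (n+1), ((n.choose j):ℝ) * u^j * (1-u)^(n-j) *
        Real.exp (-((1/Real.sqrt n)*((j:ℝ) - n*u))) ≤ Real.exp ((n:ℝ)*(-(1/Real.sqrt n))^2) := h2
      _ = Real.exp ((n:ℝ)*(1/Real.sqrt n)^2) := by ring_nf
  rw [hnl] at hmgfp hmgfm
  have e1 : ∑ j ∈ Finset.range (n+1), ((n.choose j : ℕ) : ℝ) * u^j * (1-u)^(n-j) * φ j
      = (Real.sqrt n/((n:ℝ)+1))^a * (∑ j ∈ Finset.range (n+1), ((n.choose j):ℝ) * u^j * (1-u)^(n-j))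
        + ((Real.sqrt n/((n:ℝ)+1))^a * (Real.exp 1 * k.factorial)) *
            (∑ j ∈ Finset.range (n+1), ((n.choose j):ℝ) * u^j * (1-u)^(n-j) *
              Real.exp ((1/Real.sqrt n)*((j:ℝ) - n*u)))
        + ((Real.sqrt n/((n:ℝ)+1))^a * (Real.exp 1 * k.factorial)) *
            (∑ j ∈ Finset.range (n+1), ((n.choose j):ℝ) * u^j * (1-u)^(n-j) *
              Real.exp (-((1/Real.sqrt n)*((j:ℝ) - n*u)))) := by
    rw [Finset.mul_sum, Finset.mul_sum, Finset.mul_sum, ← Finset.sum_add_distrib,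
      ← Finset.sum_add_distrib]
    apply Finset.sum_congr rfl
    intro j _
    rw [hphi]
    ring
  have hsum_le : ∑ j ∈ Finset.range (n+1), ((n.choose j : ℕ) : ℝ) * u^j * (1-u)^(n-j) * φ j
      ≤ (Real.sqrt n/((n:ℝ)+1))^a * (1 + 2*(Real.exp 1)^2 * k.factorial) := by
    rw [e1, hone]
    have hPK : (0:ℝ) ≤ (Real.sqrt n/((n:ℝ)+1))^a * (Real.exp 1 * k.factorial) :=
      mul_nonneg hP0 hK0
    have hp := mul_le_mul_of_nonneg_left hmgfp hPK
    have hm := mul_le_mul_of_nonneg_left hmgfm hPK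
    have heq : (Real.sqrt n/((n:ℝ)+1))^a * (1 + 2*(Real.exp 1)^2 * k.factorial)
        = (Real.sqrt n/((n:ℝ)+1))^a * 1
          + ((Real.sqrt n/((n:ℝ)+1))^a * (Real.exp 1 * k.factorial)) * Real.exp 1
          + ((Real.sqrt n/((n:ℝ)+1))^a * (Real.exp 1 * k.factorial)) * Real.exp 1 := by
      ring
    rw [heq]
    linarith
  calc ∑ i ∈ Finset.Icc 1 (n+1), (i:ℝ) * (((n+1).choose i : ℕ) : ℝ) *
        (|u - (2*(i:ℝ)-1)/(2*((n:ℝ)+1))|^a * u^(i-1) * (1-u)^(n+1-i))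
      ≤ ((n:ℝ)+1) * ∑ j ∈ Finset.range (n+1), ((n.choose j : ℕ) : ℝ) * u^j * (1-u)^(n-j) * φ j := step1
    _ ≤ ((n:ℝ)+1) * ((Real.sqrt n/((n:ℝ)+1))^a * (1 + 2*(Real.exp 1)^2 * k.factorial)) :=
        mul_le_mul_of_nonneg_left hsum_le (by positivity)

/-- For real `a > 0` there are `C > 0` and `N` such that for all `m ≥ N`
and all `x > 0`: if `m` points are placed i.i.d. uniformly on `[0, x]`, the expected sum of
`a`-th powers of distances of the order statistics (here `Y₍ᵢ₎ = x · X₍ᵢ₎` with `X₍ᵢ₎`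
Beta(i, m-i+1)-distributed) to the equidistant positions `sᵢ = (2i-1)x/(2m)` is at most
`C xᵃ m^{1 - a/2}`. Powers with real exponent `a` are real powers. -/
theorem stmt8 (a : ℝ) (ha : 0 < a) :
    ∃ C > 0, ∃ N : ℕ, ∀ m : ℕ, N ≤ m → ∀ x : ℝ, 0 < x →
      (∑ i ∈ Finset.Icc 1 m, (i : ℝ) * (m.choose i : ℝ) *
          ∫ u in (0:ℝ)..1,
            |x * u - (2 * (i : ℝ) - 1) * x / (2 * m)| ^ a * u ^ (i - 1) * (1 - u) ^ (m - i))
        ≤ C * x ^ a * (m : ℝ) ^ ((1 : ℝ) - a / 2) := by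
  set k := Nat.ceil a with hk_def
  have hak : a ≤ (k:ℝ) := Nat.le_ceil a
  refine ⟨1 + 2*(Real.exp 1)^2 * k.factorial, by positivity, 2, ?_⟩
  intro m hm x hx
  obtain ⟨n, rfl⟩ : ∃ n, m = n + 1 := ⟨m - 1, by omega⟩
  have hn : 1 ≤ n := by omega
  have hm' : ((n+1 : ℕ) : ℝ) = (n:ℝ) + 1 := by push_cast; ring
  have hm'pos : (0:ℝ) < (n:ℝ) + 1 := by positivity
  set g : ℕ → ℝ → ℝ := fun i u =>
    |u - (2*(i:ℝ)-1)/(2*((n:ℝ)+1))|^a * u^(i-1) * (1-u)^(n+1-i) with hg_def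
  have hg_cont : ∀ i, Continuous (g i) := by
    intro i
    apply Continuous.mul
    apply Continuous.mul
    · exact ((continuous_id.sub continuous_const).abs).rpow_const (fun u => Or.inr ha.le)
    · exact continuous_pow _
    · exact (continuous_const.sub continuous_id).pow _
  have hgi_int : ∀ i : ℕ, IntervalIntegrable (fun u => (i:ℝ) * (((n+1).choose i : ℕ) : ℝ) * g i u)
      MeasureTheory.volume 0 1 := by
    intro i
    exact (continuous_const.mul (hg_cont i)).intervalIntegrable 0 1
  -- factor x out of each integral
  have hfac : ∀ i ∈ Finset.Icc 1 (n+1),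
      (i : ℝ) * (((n+1).choose i : ℕ) : ℝ) *
          (∫ u in (0:ℝ)..1, |x * u - (2 * (i : ℝ) - 1) * x / (2 * ((n+1:ℕ):ℝ))| ^ a *
            u ^ (i - 1) * (1 - u) ^ (n + 1 - i))
        = x ^ a * ((i : ℝ) * (((n+1).choose i : ℕ) : ℝ) * ∫ u in (0:ℝ)..1, g i u) := by
    intro i _
    have : (∫ u in (0:ℝ)..1, |x * u - (2 * (i : ℝ) - 1) * x / (2 * ((n+1:ℕ):ℝ))| ^ a *
            u ^ (i - 1) * (1 - u) ^ (n + 1 - i))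
        = ∫ u in (0:ℝ)..1, x ^ a * g i u := by
      apply intervalIntegral.integral_congr
      intro u _
      have hh : x * u - (2 * (i : ℝ) - 1) * x / (2 * ((n+1:ℕ):ℝ))
          = x * (u - (2*(i:ℝ)-1)/(2*((n:ℝ)+1))) := by
        rw [hm']
        field_simp
      rw [hg_def]
      simp only []
      rw [hh, abs_mul, abs_of_pos hx, Real.mul_rpow hx.le (abs_nonneg _)]
      ring
    rw [this, intervalIntegral.integral_const_mul]
    ring
  rw [Finset.sum_congr rfl hfac, ← Finset.mul_sum]
  -- put constants inside the integrals, combine into one integral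
  have hswap : ∑ i ∈ Finset.Icc 1 (n+1), (i : ℝ) * (((n+1).choose i : ℕ) : ℝ) * ∫ u in (0:ℝ)..1, g i u
      = ∫ u in (0:ℝ)..1, ∑ i ∈ Finset.Icc 1 (n+1), (i : ℝ) * (((n+1).choose i : ℕ) : ℝ) * g i u := by
    rw [intervalIntegral.integral_finset_sum (fun i _ => hgi_int i)]
    apply Finset.sum_congr rfl
    intro i _
    rw [intervalIntegral.integral_const_mul]
  rw [hswap]
  -- bound the integral by the constant bound
  have hint_le : (∫ u in (0:ℝ)..1, ∑ i ∈ Finset.Icc 1 (n+1),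
        (i : ℝ) * (((n+1).choose i : ℕ) : ℝ) * g i u)
      ≤ ((n:ℝ)+1) * ((Real.sqrt n/((n:ℝ)+1))^a * (1 + 2*(Real.exp 1)^2 * k.factorial)) := by
    have h1 : (∫ u in (0:ℝ)..1, ∑ i ∈ Finset.Icc 1 (n+1),
        (i : ℝ) * (((n+1).choose i : ℕ) : ℝ) * g i u)
        ≤ ∫ _u in (0:ℝ)..1,
            ((n:ℝ)+1) * ((Real.sqrt n/((n:ℝ)+1))^a * (1 + 2*(Real.exp 1)^2 * k.factorial)) := by
      apply intervalIntegral.integral_mono_on (by norm_num)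
      · exact (continuous_finset_sum _ (fun i _ => continuous_const.mul (hg_cont i))).intervalIntegrable 0 1
      · exact intervalIntegrable_const
      · intro u hu
        exact mylem_pointwise a ha k hak n hn hu.1 hu.2
    rwa [intervalIntegral.integral_const, sub_zero, one_smul] at h1
  have hxa : (0:ℝ) ≤ x ^ a := Real.rpow_nonneg hx.le a
  calc x ^ a * ∫ u in (0:ℝ)..1, ∑ i ∈ Finset.Icc 1 (n+1),
        (i : ℝ) * (((n+1).choose i : ℕ) : ℝ) * g i u
      ≤ x ^ a * (((n:ℝ)+1) * ((Real.sqrt n/((n:ℝ)+1))^a * (1 + 2*(Real.exp 1)^2 * k.factorial))) :=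
        mul_le_mul_of_nonneg_left hint_le hxa
    _ ≤ (1 + 2*(Real.exp 1)^2 * k.factorial) * x ^ a * ((n+1:ℕ):ℝ) ^ ((1:ℝ) - a/2) := by
        have hD : (0:ℝ) ≤ 1 + 2*(Real.exp 1)^2 * k.factorial := by positivity
        have h2 : ((n:ℝ)+1) ^ ((-1/2:ℝ)) = Real.sqrt ((n:ℝ)+1) / ((n:ℝ)+1) := by
          rw [Real.sqrt_eq_rpow, show (-1/2:ℝ) = 1/2 - 1 by norm_num,
            Real.rpow_sub hm'pos, Real.rpow_one]
        have hs1 : Real.sqrt n / ((n:ℝ)+1) ≤ ((n:ℝ)+1) ^ ((-1/2:ℝ)) := by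
          rw [h2]
          gcongr
          linarith
        have h4 : (Real.sqrt n / ((n:ℝ)+1)) ^ a ≤ ((n:ℝ)+1) ^ ((-1/2:ℝ)*a) := by
          rw [Real.rpow_mul hm'pos.le]
          exact Real.rpow_le_rpow (by positivity) hs1 ha.le
        have h3 : ((n:ℝ)+1) * (((n:ℝ)+1) ^ ((-1/2:ℝ)*a)) = ((n:ℝ)+1)^((1:ℝ) - a/2) := by
          rw [show ((1:ℝ) - a/2) = 1 + (-1/2)*a by ring, Real.rpow_add hm'pos, Real.rpow_one]
        calc x ^ a * (((n:ℝ)+1) * ((Real.sqrt n/((n:ℝ)+1))^a * (1 + 2*(Real.exp 1)^2 * k.factorial)))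
            = (x^a * (1 + 2*(Real.exp 1)^2 * k.factorial) * ((n:ℝ)+1)) *
                ((Real.sqrt n/((n:ℝ)+1))^a) := by ring
          _ ≤ (x^a * (1 + 2*(Real.exp 1)^2 * k.factorial) * ((n:ℝ)+1)) *
                (((n:ℝ)+1) ^ ((-1/2:ℝ)*a)) := by
              apply mul_le_mul_of_nonneg_left h4
              positivity
          _ = (x^a * (1 + 2*(Real.exp 1)^2 * k.factorial)) *
                (((n:ℝ)+1) * ((n:ℝ)+1) ^ ((-1/2:ℝ)*a)) := by ring
          _ = (x^a * (1 + 2*(Real.exp 1)^2 * k.factorial)) * ((n:ℝ)+1)^((1:ℝ)-a/2) := by rw [h3]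
          _ = (1 + 2*(Real.exp 1)^2 * k.factorial) * x ^ a * ((n+1:ℕ):ℝ) ^ ((1:ℝ) - a/2) := by
              rw [hm']; ring
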